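/- If v and w are adjacent vertices that both have degree exactly 2 in a graph G with at least 5 vertices, then v is essential in G, i.e., at most one of G \ v, G*v \ v, G/v is prime. -/

import Mathlib

variable {V : Type*}

/-- A split of a simple graph. -/
def IsSplit (G : SimpleGraph V) (A B : Set V) : Prop :=
  A ∪ B = Set.univ ∧ Disjoint A B ∧ 2 ≤ A.ncard ∧ 2 ≤ B.ncard ∧
    ∃ A' B', A' ⊆ A ∧ B' ⊆ B ∧ ∀ x ∈ A, ∀ y ∈ B, (G.Adj x y ↔ (x ∈ A' ∧ y ∈ B'))

/-- A graph is prime if it has no split. -/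
def IsPrime (G : SimpleGraph V) : Prop := ¬ ∃ A B : Set V, IsSplit G A B

/-- Local complementation at a vertex. -/
def localComp (G : SimpleGraph V) (v : V) : SimpleGraph V where
  Adj x y := x ≠ y ∧ Xor' (G.Adj x y) (G.Adj v x ∧ G.Adj v y)
  symm := by
    constructor
    intro x y h
    refine ⟨h.1.symm, ?_⟩
    rw [SimpleGraph.adj_comm, and_comm]
    exact h.2
  loopless := by constructor; intro x h; exact h.1 rfl

/-- Pivoting an edge: G ∧ vw = G*v*w*v. -/
def pivot (G : SimpleGraph V) (v w : V) : SimpleGraph V :=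
  localComp (localComp (localComp G v) w) v

/-- Vertex deletion. -/
def deleteVert (G : SimpleGraph V) (v : V) : SimpleGraph {x : V // x ≠ v} :=
  G.induce {x | x ≠ v}

/-- Two vertices are twins if every other vertex is adjacent to one iff to the other. -/
def Twins (G : SimpleGraph V) (u w : V) : Prop :=
  ∀ x, x ≠ u → x ≠ w → (G.Adj x u ↔ G.Adj x w)

lemma not_prime_pendant {V : Type*} [Finite V] (H : SimpleGraph V)
    (hcard : 5 ≤ Nat.card V) (v p q : V) (hpv : p ≠ v) (hqv : q ≠ v) (hpq : p ≠ q)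
    (hpend : ∀ x, x ≠ v → x ≠ q → ¬ H.Adj x p) :
    ¬ IsPrime (deleteVert H v) := by
  intro hP
  apply hP
  classical
  haveI := Fintype.ofFinite V
  set P : {x : V // x ≠ v} := ⟨p, hpv⟩
  set Q : {x : V // x ≠ v} := ⟨q, hqv⟩
  have hPQ : P ≠ Q := by simp [P, Q, hpq]
  -- find two extra vertices
  obtain ⟨x, hx, y, hy, hxy⟩ : ∃ x ∈ (Finset.univ \ {v, p, q} : Finset V),
      ∃ y ∈ (Finset.univ \ {v, p, q} : Finset V), x ≠ y := by
    apply Finset.one_lt_card.mp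
    have h3 : ({v, p, q} : Finset V).card ≤ 3 := by
      apply le_trans (Finset.card_insert_le _ _)
      apply Nat.succ_le_succ
      apply le_trans (Finset.card_insert_le _ _)
      simp
    have hcard' : 5 ≤ (Finset.univ : Finset V).card := by
      rw [Finset.card_univ, ← Nat.card_eq_fintype_card]; exact hcard
    have heq : (Finset.univ \ ({v,p,q} : Finset V)).card
        = (Finset.univ : Finset V).card - ({v,p,q} : Finset V).card :=
      Finset.card_sdiff_of_subset (Finset.subset_univ _)
    omega
  simp only [Finset.mem_sdiff, Finset.mem_insert, Finset.mem_singleton, not_or] at hx hy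
  obtain ⟨-, hxv, hxp, hxq⟩ := hx
  obtain ⟨-, hyv, hyp, hyq⟩ := hy
  set X : {x : V // x ≠ v} := ⟨x, hxv⟩
  set Y : {x : V // x ≠ v} := ⟨y, hyv⟩
  refine ⟨{P, Q}, {P, Q}ᶜ, by simp, disjoint_compl_right, ?_, ?_, {Q},
    {y | y ∈ ({P, Q}ᶜ : Set _) ∧ (deleteVert H v).Adj Q y}, by simp, fun z hz => hz.1, ?_⟩
  · rw [Set.ncard_pair hPQ]
  · have hsub : ({X, Y} : Set {x : V // x ≠ v}) ⊆ {P, Q}ᶜ := by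
      intro z hz
      simp only [Set.mem_insert_iff, Set.mem_singleton_iff] at hz
      rcases hz with rfl | rfl <;>
        simp only [Set.mem_compl_iff, Set.mem_insert_iff, Set.mem_singleton_iff, not_or] <;>
        constructor <;> simp [X, Y, P, Q, Subtype.ext_iff, hxp, hxq, hyp, hyq]
    have hXY : X ≠ Y := by simp [X, Y, Subtype.ext_iff, hxy]
    calc 2 = ({X, Y} : Set {x : V // x ≠ v}).ncard := (Set.ncard_pair hXY).symm
      _ ≤ _ := Set.ncard_le_ncard hsub (Set.toFinite _)
  · intro z hz u hu
    simp only [Set.mem_insert_iff, Set.mem_singleton_iff] at hz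
    rcases hz with rfl | rfl
    · constructor
      · intro hAdj
        exfalso
        have huv : (u : V) ≠ v := u.2
        have huq : (u : V) ≠ q := by
          intro h
          apply hu
          simp only [Set.mem_insert_iff, Set.mem_singleton_iff]
          right; exact Subtype.ext h
        have : H.Adj (u : V) p := by
          have : H.Adj (P : V) (u : V) := hAdj
          exact this.symm
        exact hpend u huv huq this
      · rintro ⟨hz, -⟩
        simp only [Set.mem_singleton_iff] at hz
        exact absurd hz hPQ
    · constructor
      · intro hAdj
        exact ⟨rfl, hu, hAdj⟩
      · rintro ⟨-, -, hAdj⟩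
        exact hAdj

lemma localComp_adj {V : Type*} (G : SimpleGraph V) (v x y : V) :
    (localComp G v).Adj x y ↔ x ≠ y ∧ Xor' (G.Adj x y) (G.Adj v x ∧ G.Adj v y) := Iff.rfl

lemma pivot_adj {V : Type*} (G : SimpleGraph V) (v w x y : V) :
    (pivot G v w).Adj x y ↔
      (localComp (localComp (localComp G v) w) v).Adj x y := Iff.rfl

attribute [irreducible] localComp pivot

lemma neighbor_struct {V : Type*} (G : SimpleGraph V) (v w : V) (hadj : G.Adj v w)
    (hv : (G.neighborSet v).ncard = 2) :
    ∃ a, a ≠ w ∧ ∀ z, G.Adj v z ↔ (z = w ∨ z = a) := by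
  obtain ⟨x, y, hxy, hN⟩ := Set.ncard_eq_two.mp hv
  have hmem : ∀ z, G.Adj v z ↔ (z = x ∨ z = y) := by
    intro z
    have := Set.ext_iff.mp hN z
    simpa using this
  have hw : w = x ∨ w = y := (hmem w).mp hadj
  rcases hw with rfl | rfl
  · exact ⟨y, fun h => hxy h.symm, fun z => by rw [hmem]⟩
  · exact ⟨x, fun h => hxy h, fun z => by rw [hmem]; tauto⟩

/-- If v and w are adjacent vertices both of degree exactly 2 in a graph G
with at least 5 vertices, then v is essential: at most one of G∖v, G*v∖v, G/v is prime.
Here G/v is computed by pivoting the edge vw and deleting v. -/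
theorem essential_of_adj_degree_two {V : Type*} [Finite V] (G : SimpleGraph V)
    (hcard : 5 ≤ Nat.card V) (v w : V) (hadj : G.Adj v w)
    (hv : (G.neighborSet v).ncard = 2) (hw : (G.neighborSet w).ncard = 2) :
    ¬ ((IsPrime (deleteVert G v) ∧ IsPrime (deleteVert (localComp G v) v)) ∨
       (IsPrime (deleteVert G v) ∧ IsPrime (deleteVert (pivot G v w) v)) ∨
       (IsPrime (deleteVert (localComp G v) v) ∧ IsPrime (deleteVert (pivot G v w) v))) := by
  obtain ⟨a, haw, hNa⟩ := neighbor_struct G v w hadj hv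
  obtain ⟨b, hbv, hNb⟩ := neighbor_struct G w v hadj.symm hw
  have hav : a ≠ v := by
    intro h; subst h; exact G.irrefl ((hNa a).mpr (Or.inr rfl))
  have hwb : w ≠ b := by
    intro h; subst h; exact G.irrefl ((hNb w).mpr (Or.inr rfl))
  have hwv : w ≠ v := hadj.ne'
  -- G \ v is not prime: w is pendant, attached to b
  have npG : ¬ IsPrime (deleteVert G v) := by
    refine not_prime_pendant G hcard v w b hwv hbv hwb ?_
    intro x hxv hxb hAdj
    have := (hNb x).mp hAdj.symm
    tauto
  -- (G ∧ vw) \ v is not prime: w is pendant, attached to a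
  have npP : ¬ IsPrime (deleteVert (pivot G v w) v) := by
    refine not_prime_pendant _ hcard v w a hwv hav (fun h => haw h.symm) ?_
    intro x hxv hxa
    by_cases hxw : x = w
    · exact hxw ▸ (pivot G v w).irrefl
    · have hvx : ¬ G.Adj v x := by rw [hNa]; tauto
      have hxv' : ¬ G.Adj x v := fun h => hvx h.symm
      have hvw : G.Adj v w := hadj
      have hwv' : G.Adj w v := hadj.symm
      have hsym : G.Adj x w ↔ G.Adj w x := ⟨SimpleGraph.Adj.symm, SimpleGraph.Adj.symm⟩
      have hvv : ¬ G.Adj v v := G.irrefl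
      have hww : ¬ G.Adj w w := G.irrefl
      have hvw' : v ≠ w := hadj.ne
      have hxw' : x ≠ w := hxw
      have hxv'' : x ≠ v := hxv
      have hwx' : w ≠ x := fun h => hxw h.symm
      have hvx''' : v ≠ x := fun h => hxv h.symm
      have hwv'' : w ≠ v := fun h => hvw' h.symm
      by_cases hq : G.Adj x w
      · have hq' : G.Adj w x := hq.symm
        simp [pivot_adj, localComp_adj, Xor', hvw, hwv', hvx, hxv', hq, hq',
          hxw', hxv'', hvw', hwx', hvx''', hwv'', hvv, hww]
      · have hq' : ¬ G.Adj w x := fun h => hq h.symm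
        simp [pivot_adj, localComp_adj, Xor', hvw, hwv', hvx, hxv', hq, hq',
          hxw', hxv'', hvw', hwx', hvx''', hwv'', hvv, hww]
  rcases Classical.em (IsPrime (deleteVert G v)) with h | h
  · exact absurd h npG
  · rintro (⟨h1, -⟩ | ⟨h1, -⟩ | ⟨-, h2⟩)
    · exact npG h1
    · exact npG h1
    · exact npP h2
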